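/- Let c̄ be the smallest symbol of Σ, let w be a nonempty word over Σ, and let s = max( { i : w[i] > c̄ } ∪ { -1 } ). Then CFL(w) is the concatenation of CFL(w[0..s]) and CFL(c̄^{|w|-1-s}), i.e., the Lyndon factorization of w consists of the Lyndon factorization of the prefix w[0..s] followed by |w|-1-s factors each equal to the one-symbol word c̄. -/

import Mathlib

variable {α : Type*}

/-- The rotation `rot(w,i) = w[i..|w|-1] w[0..i-1]`. -/
def rot (w : List α) (i : ℕ) : List α := w.drop i ++ w.take i

/-- A Lyndon word: a nonempty word strictly smaller than all of its proper rotations. -/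
def IsLyndon [LinearOrder α] (w : List α) : Prop :=
  w ≠ [] ∧ ∀ i, 0 < i → i < w.length → w < rot w i

/-- `IsCFL w f` : `f` is the Chen–Fox–Lyndon factorization of `w`, i.e. a
nonincreasing sequence of Lyndon words whose concatenation is `w`. -/
def IsCFL [LinearOrder α] (w : List α) (f : List (List α)) : Prop :=
  f.flatten = w ∧ (∀ x ∈ f, IsLyndon x) ∧ f.Chain' (· ≥ ·)

/-- `u^k` : the `k`-fold concatenation of the word `u`. -/
def listPow (u : List α) (k : ℕ) : List α := (List.replicate k u).flatten

/-- `P`: the set of nonempty prefixes of Lyndon words. -/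
def InP [LinearOrder α] (w : List α) : Prop :=
  w ≠ [] ∧ ∃ u : List α, IsLyndon (w ++ u)

/-- `P' = P ∪ { c^k : k ≥ 2 }` where `c` is the maximum symbol of the alphabet. -/
def InP' [LinearOrder α] (w : List α) : Prop :=
  InP w ∨ ∃ (c : α) (k : ℕ), 2 ≤ k ∧ (∀ a : α, a ≤ c) ∧ w = List.replicate k c

/-- A border of `w`: a proper prefix of `w` that is also a suffix of `w`. -/
def IsBorder (b w : List α) : Prop := b <+: w ∧ b <:+ w ∧ b.length < w.length

/-- The length of the longest common prefix of two words. -/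
def lcpLen [DecidableEq α] : List α → List α → ℕ
  | a :: u, b :: v => if a = b then lcpLen u v + 1 else 0
  | _, _ => 0


/-- Factoring out the trailing run of the smallest symbol `c̄`:
if `w = p · c̄^n` where `p` does not end with `c̄` (i.e. `s = max{i : w[i] > c̄} ∪ {-1}`
and `p = w[0..s]`, `n = |w| - 1 - s`), then `CFL(w) = CFL(p) CFL(c̄^n)`, the latter
being `n` factors each equal to the one-symbol word `c̄`. -/
theorem cfl_strip_smallest_tail [LinearOrder α] (cbar : α) (hcbar : ∀ a : α, cbar ≤ a)
    (w p : List α) (hw : w ≠ []) (n : ℕ)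
    (hdecomp : w = p ++ List.replicate n cbar)
    (hlast : ∀ hp : p ≠ [], p.getLast hp ≠ cbar)
    (f : List (List α)) (hf : IsCFL p f) :
    IsCFL w (f ++ List.replicate n [cbar]) := by
  obtain ⟨hflat, hlyn, hchain⟩ := hf
  have hle : ∀ x : List α, x ≠ [] → [cbar] ≤ x := by
    intro x hx
    cases x with
    | nil => exact absurd rfl hx
    | cons a t =>
      rcases eq_or_lt_of_le (hcbar a) with h | h
      · subst h; exact List.cons_le_cons cbar (le_of_lt_or_eq (by cases t with | nil => exact Or.inr rfl | cons b u => exact Or.inl List.Lex.nil))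
      · exact le_of_lt (List.Lex.rel h)
  have hrep : ∀ m : ℕ, (List.replicate m ([cbar] : List α)).flatten = List.replicate m cbar := by
    intro m; induction m with
    | zero => simp
    | succ k ih => simp [List.replicate_succ, ih]
  refine ⟨?_, ?_, ?_⟩
  · simp [hdecomp, hflat, hrep]
  · intro x hx
    rcases List.mem_append.mp hx with hx | hx
    · exact hlyn x hx
    · have : x = [cbar] := List.eq_of_mem_replicate hx
      subst this
      exact ⟨by simp, by intro i hi hi'; simp at hi'; omega⟩
  · rw [List.Chain', List.isChain_append]
    refine ⟨hchain, List.isChain_replicate_of_rel _ le_rfl, ?_⟩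
    intro x hx y hy
    have hyx : y = [cbar] := by
      rcases n with _ | m
      · simp at hy
      · simp [List.replicate_succ] at hy; exact hy.symm
    have hxf : x ∈ f := List.mem_of_mem_getLast? hx
    rw [hyx]
    exact hle x (hlyn x hxf).1
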